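/- arXiv:0811.1315 — 2 statements merged into one kernel-verified Lean document; each statement's English description precedes it below -/
import Mathlib

section
/- The gradient of the function C₋₃(a,b) = 2(2b − a + 12)/((b+3)(b−2a−3)(b−a+3)(b+a−3)) vanishes at (a,b) = (0, √13 − 4), and this point satisfies the constraints b + 3 > 0, b − 2a − 3 < 0, b − a + 3 > 0, b + a − 3 < 0. -/
/-- The gradient of `C₋₃(a,b) = 2(2b - a + 12)/((b+3)(b-2a-3)(b-a+3)(b+a-3))` vanishes at
`(a, b) = (0, √13 - 4)`, and this point satisfies `b + 3 > 0`, `b - 2a - 3 < 0`,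
`b - a + 3 > 0`, `b + a - 3 < 0`. -/
theorem stmt_13 :
    let b₀ : ℝ := Real.sqrt 13 - 4
    deriv (fun a : ℝ =>
        2 * (2 * b₀ - a + 12) /
          ((b₀ + 3) * (b₀ - 2 * a - 3) * (b₀ - a + 3) * (b₀ + a - 3))) 0 = 0 ∧
    deriv (fun b : ℝ =>
        2 * (2 * b - 0 + 12) /
          ((b + 3) * (b - 2 * 0 - 3) * (b - 0 + 3) * (b + 0 - 3))) b₀ = 0 ∧
    b₀ + 3 > 0 ∧ b₀ - 2 * 0 - 3 < 0 ∧ b₀ - 0 + 3 > 0 ∧ b₀ + 0 - 3 < 0 := by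
  intro b₀
  have hs2 : Real.sqrt 13 ^ 2 = 13 := Real.sq_sqrt (by norm_num)
  have hs_lb : (3 : ℝ) < Real.sqrt 13 := by
    nlinarith [Real.sqrt_nonneg 13, hs2]
  have hs_ub : Real.sqrt 13 < 4 := by
    nlinarith [Real.sqrt_nonneg 13, hs2]
  have hb : b₀ ^ 2 + 8 * b₀ + 3 = 0 := by
    simp only [b₀]; nlinarith [hs2]
  have hb1 : b₀ + 3 > 0 := by simp only [b₀]; linarith
  have hb2 : b₀ - 3 < 0 := by simp only [b₀]; linarith
  have h1 : deriv (fun a : ℝ =>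
        2 * (2 * b₀ - a + 12) /
          ((b₀ + 3) * (b₀ - 2 * a - 3) * (b₀ - a + 3) * (b₀ + a - 3))) 0 = 0 := by
    have hN : HasDerivAt (fun a : ℝ => 2 * (2 * b₀ - a + 12)) (2 * (-1)) 0 :=
      (((hasDerivAt_id (0:ℝ)).const_sub (2 * b₀)).add_const 12).const_mul 2
    have h2 : HasDerivAt (fun a : ℝ => b₀ - 2 * a - 3) (-(2 * 1)) 0 :=
      (((hasDerivAt_id (0:ℝ)).const_mul 2).const_sub b₀).sub_const 3
    have h3 : HasDerivAt (fun a : ℝ => b₀ - a + 3) (-1) 0 :=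
      ((hasDerivAt_id (0:ℝ)).const_sub b₀).add_const 3
    have h4 : HasDerivAt (fun a : ℝ => b₀ + a - 3) 1 0 :=
      ((hasDerivAt_id (0:ℝ)).const_add b₀).sub_const 3
    have hD := ((h2.const_mul (b₀ + 3)).mul h3).mul h4
    have hD0 : (b₀ + 3) * (b₀ - 2 * (0:ℝ) - 3) * (b₀ - 0 + 3) * (b₀ + 0 - 3) ≠ 0 := by
      have : (b₀ + 3) * (b₀ - 2 * (0:ℝ) - 3) * (b₀ - 0 + 3) * (b₀ + 0 - 3) > 0 := by
        have e1 : b₀ - 2 * (0:ℝ) - 3 < 0 := by linarith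
        have e2 : b₀ - (0:ℝ) + 3 > 0 := by linarith
        have e3 : b₀ + (0:ℝ) - 3 < 0 := by linarith
        nlinarith
      linarith
    have hf := hN.div hD hD0
    refine hf.deriv.trans ?_
    rw [div_eq_zero_iff]
    left
    simp only [Pi.mul_apply]
    linear_combination (6 * (b₀ ^ 2 - 9)) * hb
  have h2 : deriv (fun b : ℝ =>
        2 * (2 * b - 0 + 12) /
          ((b + 3) * (b - 2 * 0 - 3) * (b - 0 + 3) * (b + 0 - 3))) b₀ = 0 := by
    have hN : HasDerivAt (fun b : ℝ => 2 * (2 * b - 0 + 12)) (2 * (2 * 1)) b₀ :=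
      ((((hasDerivAt_id b₀).const_mul 2).sub_const 0).add_const 12).const_mul 2
    have g1 : HasDerivAt (fun b : ℝ => b + 3) 1 b₀ := (hasDerivAt_id b₀).add_const 3
    have g2 : HasDerivAt (fun b : ℝ => b - 2 * 0 - 3) 1 b₀ :=
      ((hasDerivAt_id b₀).sub_const (2 * 0)).sub_const 3
    have g3 : HasDerivAt (fun b : ℝ => b - 0 + 3) 1 b₀ :=
      ((hasDerivAt_id b₀).sub_const 0).add_const 3
    have g4 : HasDerivAt (fun b : ℝ => b + 0 - 3) 1 b₀ :=
      ((hasDerivAt_id b₀).add_const 0).sub_const 3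
    have hD := ((g1.mul g2).mul g3).mul g4
    have hD0 : (b₀ + 3) * (b₀ - 2 * (0:ℝ) - 3) * (b₀ - 0 + 3) * (b₀ + 0 - 3) ≠ 0 := by
      have : (b₀ + 3) * (b₀ - 2 * (0:ℝ) - 3) * (b₀ - 0 + 3) * (b₀ + 0 - 3) > 0 := by
        have e1 : b₀ - 2 * (0:ℝ) - 3 < 0 := by linarith
        have e2 : b₀ - (0:ℝ) + 3 > 0 := by linarith
        have e3 : b₀ + (0:ℝ) - 3 < 0 := by linarith
        nlinarith
      linarith
    have hf := hN.div hD hD0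
    refine hf.deriv.trans ?_
    rw [div_eq_zero_iff]
    left
    simp only [Pi.mul_apply]
    linear_combination (-12 * (b₀ ^ 2 - 9)) * hb
  refine ⟨h1, h2, hb1, by linarith, by linarith, by linarith⟩
end

section
/- At the volume-minimizing point (a₀, b₀) = (0, √13 − 4), the partial derivative with respect to a of C₋₁(a,b) = −(6b² + 2a²b − 6ab − 18b − a³ + 9a² + 9a − 162)/(6(b+3)(b−2a−3)(b−a+3)(b+a−3)) equals 4(137√13 − 491)/((√13 − 7)⁴(√13 − 1)³), which is nonzero. -/
/-- At the volume-minimizing point `(a₀, b₀) = (0, √13 - 4)`, the partial derivative in `a`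
of `C₋₁(a,b) = -(6b² + 2a²b - 6ab - 18b - a³ + 9a² + 9a - 162)/(6(b+3)(b-2a-3)(b-a+3)(b+a-3))`
equals `4(137√13 - 491)/((√13 - 7)⁴(√13 - 1)³)`, which is nonzero. -/
theorem stmt_14 :
    let b₀ : ℝ := Real.sqrt 13 - 4
    deriv (fun a : ℝ =>
        -(6 * b₀ ^ 2 + 2 * a ^ 2 * b₀ - 6 * a * b₀ - 18 * b₀ - a ^ 3 + 9 * a ^ 2 + 9 * a - 162)
          / (6 * (b₀ + 3) * (b₀ - 2 * a - 3) * (b₀ - a + 3) * (b₀ + a - 3))) 0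
      = 4 * (137 * Real.sqrt 13 - 491) /
          ((Real.sqrt 13 - 7) ^ 4 * (Real.sqrt 13 - 1) ^ 3) ∧
    4 * (137 * Real.sqrt 13 - 491) /
        ((Real.sqrt 13 - 7) ^ 4 * (Real.sqrt 13 - 1) ^ 3) ≠ 0 := by
  have hs : Real.sqrt 13 ^ 2 = 13 := Real.sq_sqrt (by norm_num)
  have hnn : (0:ℝ) ≤ Real.sqrt 13 := Real.sqrt_nonneg 13
  have h4 : Real.sqrt 13 < 4 := by nlinarith
  have h3 : 3 < Real.sqrt 13 := by nlinarith
  intro b₀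
  have hb : b₀ = Real.sqrt 13 - 4 := rfl
  have hbp : b₀ + 3 ≠ 0 := by rw [hb]; nlinarith
  have hbm : b₀ - 3 ≠ 0 := by rw [hb]; nlinarith
  constructor
  · have h1 : HasDerivAt (fun a : ℝ => a) 1 0 := hasDerivAt_id 0
    have h2 : HasDerivAt (fun a : ℝ => a ^ 2) 0 0 := by
      simpa using hasDerivAt_pow 2 (0:ℝ)
    have h3' : HasDerivAt (fun a : ℝ => a ^ 3) 0 0 := by
      simpa using hasDerivAt_pow 3 (0:ℝ)
    have hnum : HasDerivAt (fun a : ℝ =>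
        -(6 * b₀ ^ 2 + 2 * a ^ 2 * b₀ - 6 * a * b₀ - 18 * b₀ - a ^ 3 + 9 * a ^ 2 + 9 * a - 162))
        (6 * b₀ - 9) 0 := by
      have h : HasDerivAt (fun a : ℝ =>
          (-6 * b₀ ^ 2 + 18 * b₀ + 162) + ((6 * b₀ - 9) * a + ((-2 * b₀ - 9) * a ^ 2 + a ^ 3)))
          ((6 * b₀ - 9) * 1 + ((-2 * b₀ - 9) * 0 + 0)) 0 :=
        ((h1.const_mul _).add ((h2.const_mul _).add h3')).const_add _
      have h' : HasDerivAt (fun a : ℝ =>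
          (-6 * b₀ ^ 2 + 18 * b₀ + 162) + ((6 * b₀ - 9) * a + ((-2 * b₀ - 9) * a ^ 2 + a ^ 3)))
          (6 * b₀ - 9) 0 := by convert h using 1; ring
      exact h'.congr_of_eventuallyEq (Filter.Eventually.of_forall fun a => by ring)
    have hden : HasDerivAt (fun a : ℝ =>
        6 * (b₀ + 3) * (b₀ - 2 * a - 3) * (b₀ - a + 3) * (b₀ + a - 3))
        (-12 * b₀ ^ 3 + 108 * b₀) 0 := by
      have h : HasDerivAt (fun a : ℝ =>
          (6 * b₀ ^ 4 - 108 * b₀ ^ 2 + 486) + ((-12 * b₀ ^ 3 + 108 * b₀) * a +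
            ((-6 * b₀ ^ 2 - 72 * b₀ - 162) * a ^ 2 + (12 * b₀ + 36) * a ^ 3)))
          ((-12 * b₀ ^ 3 + 108 * b₀) * 1 + ((-6 * b₀ ^ 2 - 72 * b₀ - 162) * 0 + (12 * b₀ + 36) * 0)) 0 :=
        ((h1.const_mul _).add ((h2.const_mul _).add (h3'.const_mul _))).const_add _
      have h' : HasDerivAt (fun a : ℝ =>
          (6 * b₀ ^ 4 - 108 * b₀ ^ 2 + 486) + ((-12 * b₀ ^ 3 + 108 * b₀) * a +
            ((-6 * b₀ ^ 2 - 72 * b₀ - 162) * a ^ 2 + (12 * b₀ + 36) * a ^ 3)))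
          (-12 * b₀ ^ 3 + 108 * b₀) 0 := by convert h using 1; ring
      exact h'.congr_of_eventuallyEq (Filter.Eventually.of_forall fun a => by ring)
    have hd0 : (6 * (b₀ + 3) * (b₀ - 2 * 0 - 3) * (b₀ - 0 + 3) * (b₀ + 0 - 3) : ℝ) ≠ 0 := by
      have : (6 * (b₀ + 3) * (b₀ - 2 * 0 - 3) * (b₀ - 0 + 3) * (b₀ + 0 - 3) : ℝ)
          = 6 * ((b₀ + 3) * (b₀ - 3)) ^ 2 := by ring
      rw [this]
      positivity
    have hdiv := hnum.div hden hd0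
    simp only [Pi.div_def] at hdiv
    rw [hdiv.deriv]
    rw [hb]
    rw [div_eq_div_iff (by positivity)
      (by
        have h7 : Real.sqrt 13 - 7 ≠ 0 := by nlinarith
        have h1' : Real.sqrt 13 - 1 ≠ 0 := by nlinarith
        positivity)]
    linear_combination (-14478030 + 68216526 * Real.sqrt 13 - 131105772 * Real.sqrt 13 ^ 2
      + 132285384 * Real.sqrt 13 ^ 3 - 75723588 * Real.sqrt 13 ^ 4
      + 25349076 * Real.sqrt 13 ^ 5 - 5137056 * Real.sqrt 13 ^ 6
      + 639432 * Real.sqrt 13 ^ 7 - 47934 * Real.sqrt 13 ^ 8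
      + 1998 * Real.sqrt 13 ^ 9 - 36 * Real.sqrt 13 ^ 10) * hs
  · apply div_ne_zero
    · nlinarith
    · have h7 : Real.sqrt 13 - 7 ≠ 0 := by nlinarith
      have h1' : Real.sqrt 13 - 1 ≠ 0 := by nlinarith
      positivity
end
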